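/- For every integer m ≥ 1, t_F(m) = Σ_{j≥0, 2j≤m−1} C(m−1−j, j)·(q−3)^{m−1−2j}·(q−1)^{j+1} + q · Σ_{j≥0, 2j≤m−2} C(m−2−j, j)·(q−3)^{m−2−2j}·(q−1)^{j}, as an identity in the polynomial ring ℚ[q], where C denotes the ordinary binomial coefficient and the second sum is empty when m = 1. In particular, t_F(m) is a monic polynomial in q of degree m. -/

import Mathlib

open Polynomial

noncomputable def tFq (m : ℕ) : Polynomial ℚ :=
  ∑ c : Composition m,
    (c.blocks.map (fun (ℓ : ℕ) =>
      (-1 : Polynomial ℚ) ^ (ℓ - 1) * (Polynomial.X - Polynomial.C (ℓ : ℚ)))).prod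

noncomputable def pf (ℓ : ℕ) : Polynomial ℚ :=
  (-1 : Polynomial ℚ) ^ (ℓ - 1) * (Polynomial.X - Polynomial.C (ℓ : ℚ))

lemma tFq_zero : tFq 0 = 1 := by
  have hs : (Finset.univ : Finset (Composition 0)) = {⟨[], by simp, by simp⟩} := by
    ext c
    simp only [Finset.mem_univ, Finset.mem_singleton, true_iff]
    ext1
    have := c.blocks_sum
    cases h : c.blocks with
    | nil => simp [h]
    | cons a t =>
      exfalso
      have ha := c.blocks_pos (by rw [h]; exact List.mem_cons_self)
      rw [h] at this
      simp at this
      omega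
  rw [tFq, hs]
  simp

/-- decomposition equiv -/
def compEquiv (n : ℕ) : Composition (n + 1) ≃ Σ i : Fin (n + 1), Composition (n - i) where
  toFun c := by
    have h1 : c.blocks ≠ [] := by
      intro h
      have := c.blocks_sum; rw [h] at this; simp at this
    have hmem : c.blocks.headI ∈ c.blocks := by
      obtain ⟨a, t, hat⟩ := List.exists_cons_of_ne_nil h1
      rw [hat]; simp
    have h3 := c.blocks_pos hmem
    refine ⟨⟨c.blocks.headI - 1, ?_⟩, ⟨c.blocks.tail, ?_, ?_⟩⟩
    · have h4 : c.blocks.headI ≤ c.blocks.sum :=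
        List.single_le_sum (fun x hx => le_of_lt (c.blocks_pos hx)) _ hmem
      rw [c.blocks_sum] at h4
      omega
    · intro i hi
      exact c.blocks_pos (List.mem_of_mem_tail hi)
    · have h5 : c.blocks.headI + c.blocks.tail.sum = n + 1 := by
        obtain ⟨a, t, hat⟩ := List.exists_cons_of_ne_nil h1
        have hsum := c.blocks_sum
        rw [hat] at hsum ⊢
        simpa using hsum
      simp only
      omega
  invFun p := ⟨(p.1 + 1) :: p.2.blocks, by
      intro i hi
      rcases List.mem_cons.mp hi with h | h
      · omega
      · exact p.2.blocks_pos h, by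
      simp [p.2.blocks_sum]
      omega⟩
  left_inv c := by
    have h1 : c.blocks ≠ [] := by
      intro h
      have := c.blocks_sum; rw [h] at this; simp at this
    obtain ⟨a, t, hat⟩ := List.exists_cons_of_ne_nil h1
    have h3 : 0 < a := c.blocks_pos (by rw [hat]; simp)
    ext1
    simp only [hat, List.headI, List.tail]
    congr 1
    omega
  right_inv p := by
    rcases p with ⟨i, c⟩
    refine Sigma.ext ?_ ?_
    · simp
    · simp only
      refine heq_of_eq_of_heq ?_ (heq_of_eq rfl)
      ext1
      simp

lemma tFq_succ (n : ℕ) :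
    tFq (n + 1) = ∑ i ∈ Finset.range (n + 1), pf (i + 1) * tFq (n - i) := by
  rw [tFq]
  rw [← Equiv.sum_comp (compEquiv n).symm
    (fun c => ((c : Composition (n+1)).blocks.map (fun (ℓ : ℕ) =>
      (-1 : Polynomial ℚ) ^ (ℓ - 1) * (Polynomial.X - Polynomial.C (ℓ : ℚ)))).prod)]
  rw [← Finset.univ_sigma_univ, Finset.sum_sigma]
  rw [← Fin.sum_univ_eq_sum_range (fun i => pf (i + 1) * tFq (n - i))]
  refine Finset.sum_congr rfl (fun i _ => ?_)
  rw [tFq, Finset.mul_sum]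
  refine Finset.sum_congr rfl (fun c _ => ?_)
  show ((((compEquiv n).symm ⟨i, c⟩).blocks).map _).prod = _
  simp only [compEquiv, Equiv.coe_fn_symm_mk]
  rw [List.map_cons, List.prod_cons]
  rfl

noncomputable def Aq (n : ℕ) : Polynomial ℚ :=
  ∑ i ∈ Finset.range (n + 1), (-1 : Polynomial ℚ) ^ i * tFq (n - i)

lemma pf_one : pf 1 = X - C 1 := by simp [pf]

lemma pf_step (i : ℕ) : pf (i + 2) = -pf (i + 1) + (-1 : Polynomial ℚ) ^ i := by
  simp only [pf, Nat.add_sub_cancel]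
  push_cast
  simp only [map_add, map_one, map_ofNat]
  ring

lemma tA (n : ℕ) : tFq (n + 2) = (X - C 2) * tFq (n + 1) + Aq n := by
  rw [tFq_succ (n + 1), Finset.sum_range_succ']
  simp only [Nat.add_sub_cancel, Nat.sub_zero]
  have : ∀ i ∈ Finset.range (n + 1),
      pf (i + 1 + 1) * tFq (n + 1 - (i + 1))
        = -(pf (i + 1) * tFq (n - i)) + (-1 : Polynomial ℚ) ^ i * tFq (n - i) := by
    intro i _
    rw [show n + 1 - (i + 1) = n - i by omega, show i + 1 + 1 = i + 2 from rfl, pf_step]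
    ring
  rw [Finset.sum_congr rfl this, Finset.sum_add_distrib, Finset.sum_neg_distrib,
    ← tFq_succ, ← Aq, pf_one]
  simp only [map_ofNat, map_one]
  ring

lemma Aq_step (n : ℕ) : Aq (n + 1) = tFq (n + 1) - Aq n := by
  rw [Aq, Finset.sum_range_succ']
  simp only [Nat.sub_zero, pow_zero, one_mul]
  have : ∀ i ∈ Finset.range (n + 1),
      (-1 : Polynomial ℚ) ^ (i + 1) * tFq (n + 1 - (i + 1))
        = -((-1 : Polynomial ℚ) ^ i * tFq (n - i)) := by
    intro i _
    rw [show n + 1 - (i + 1) = n - i by omega, pow_succ]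
    ring
  rw [Finset.sum_congr rfl this, Finset.sum_neg_distrib, ← Aq]
  ring

lemma tFq_rec (n : ℕ) :
    tFq (n + 3) = (X - C 3) * tFq (n + 2) + (X - C 1) * tFq (n + 1) := by
  have h1 := tA (n + 1)
  have h2 := tA n
  have h3 := Aq_step n
  rw [show n + 1 + 2 = n + 3 from rfl] at h1
  rw [h1, h3]
  have : Aq n = tFq (n + 2) - (X - C 2) * tFq (n + 1) := by rw [h2]; ring
  rw [this]
  simp only [map_ofNat, map_one]
  ring

noncomputable def cf (m j : ℕ) : Polynomial ℚ :=
  C (((m - j).choose j : ℚ)) * (X - C 3) ^ (m - 2 * j) * (X - C 1) ^ j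

noncomputable def sP (n : ℕ) : Polynomial ℚ := ∑ j ∈ Finset.range (n + 1), cf n j

lemma cf_zero_of_lt {n j : ℕ} (h : n < 2 * j) : cf n j = 0 := by
  rw [cf, Nat.choose_eq_zero_of_lt (by omega)]
  simp

lemma sP_ext (n N : ℕ) (h : n + 1 ≤ N) : sP n = ∑ j ∈ Finset.range N, cf n j := by
  rw [sP]
  refine Finset.sum_subset (Finset.range_subset_range.mpr h) (fun j _ hj => ?_)
  rw [Finset.mem_range, not_lt] at hj
  exact cf_zero_of_lt (by omega)

lemma sP_zero : sP 0 = 1 := by simp [sP, cf]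

lemma sP_one : sP 1 = X - C 3 := by
  rw [sP, Finset.sum_range_succ, Finset.sum_range_one, cf, cf]
  norm_num

lemma key (n k : ℕ) :
    cf (n + 2) (k + 1) = (X - C 3) * cf (n + 1) (k + 1) + (X - C 1) * cf n k := by
  rw [cf, cf, cf, show n + 2 - (k + 1) = n + 1 - k by omega,
    show n + 2 - 2 * (k + 1) = n - 2 * k by omega,
    show n + 1 - (k + 1) = n - k by omega,
    show n + 1 - 2 * (k + 1) = n - 1 - 2 * k by omega]
  rcases lt_trichotomy (2 * k) n with h | h | h
  · rw [show n + 1 - k = (n - k) + 1 by omega, Nat.choose_succ_succ,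
      show n - 2 * k = (n - 1 - 2 * k) + 1 by omega]
    push_cast
    simp only [map_add]
    ring
  · rw [show n + 1 - k = k + 1 by omega, show n - k = k by omega,
      show n - 2 * k = 0 by omega, show n - 1 - 2 * k = 0 by omega]
    simp only [Nat.choose_self, Nat.choose_succ_self, Nat.cast_one, Nat.cast_zero,
      map_one, map_zero, pow_zero]
    ring
  · rw [Nat.choose_eq_zero_of_lt (by omega : n + 1 - k < k + 1),
      Nat.choose_eq_zero_of_lt (by omega : n - k < k + 1),
      Nat.choose_eq_zero_of_lt (by omega : n - k < k)]
    simp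

lemma sP_rec (n : ℕ) : sP (n + 2) = (X - C 3) * sP (n + 1) + (X - C 1) * sP n := by
  have hg : (X - C 1) * sP n
      = ∑ j ∈ Finset.range (n + 3),
          (if j = 0 then 0 else (X - C 1) * cf n (j - 1)) := by
    rw [Finset.sum_range_succ' (fun j => if j = 0 then (0 : Polynomial ℚ)
      else (X - C 1) * cf n (j - 1)) (n + 2)]
    simp only [if_neg (Nat.succ_ne_zero _), Nat.add_sub_cancel]
    norm_num
    rw [← Finset.mul_sum, ← sP_ext n (n + 2) (by omega)]
  rw [sP_ext (n + 1) (n + 3) (by omega), Finset.mul_sum, hg, ← Finset.sum_add_distrib,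
    sP]
  refine Finset.sum_congr rfl (fun j _ => ?_)
  cases j with
  | zero => simp [cf]; ring
  | succ k => rw [if_neg (Nat.succ_ne_zero _), Nat.add_sub_cancel]; exact key n k


lemma tFq_one : tFq 1 = X - C 1 := by
  rw [tFq_succ, Finset.sum_range_one, Nat.sub_zero, tFq_zero, pf_one, mul_one]

lemma tFq_two : tFq 2 = (X - C 1) ^ 2 - (X - C 2) := by
  rw [show (2 : ℕ) = 1 + 1 from rfl, tFq_succ, Finset.sum_range_succ,
    Finset.sum_range_one]
  simp only [Nat.sub_zero, Nat.sub_self, tFq_zero, tFq_one, pf_one, mul_one, pf]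
  push_cast
  simp only [map_one, map_ofNat]
  ring

lemma main : ∀ n : ℕ, tFq (n + 2) = (X - C 1) * sP (n + 1) + X * sP n
    ∧ tFq (n + 3) = (X - C 1) * sP (n + 2) + X * sP (n + 1) := by
  intro n
  induction n with
  | zero =>
    constructor
    · rw [tFq_two, sP_one, sP_zero]
      simp only [map_ofNat, map_one]
      ring
    · rw [show (3 : ℕ) = 0 + 3 from rfl, tFq_rec 0, tFq_two, tFq_one,
        sP_rec 0, sP_one, sP_zero]
      simp only [map_ofNat, map_one]
      ring
  | succ n ih =>
    refine ⟨ih.2, ?_⟩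
    have h4 : tFq (n + 4) = (X - C 3) * tFq (n + 3) + (X - C 1) * tFq (n + 2) :=
      tFq_rec (n + 1)
    have h5 : sP (n + 3) = (X - C 3) * sP (n + 2) + (X - C 1) * sP (n + 1) :=
      sP_rec (n + 1)
    show tFq (n + 4) = (X - C 1) * sP (n + 3) + X * sP (n + 2)
    rw [h4, ih.1, ih.2, h5, sP_rec n]
    ring

lemma aux_monic (p q : Polynomial ℚ) (a : ℕ) (hp : p.Monic) (hd : p.natDegree = a)
    (hq : q.degree < (a : ℕ)) : (p + q).Monic ∧ (p + q).natDegree = a := by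
  have hdeg : q.degree < p.degree := by
    rw [degree_eq_natDegree hp.ne_zero, hd]; exact_mod_cast hq
  refine ⟨hp.add_of_left hdeg, ?_⟩
  rw [natDegree_eq_of_degree_eq (degree_add_eq_left_of_degree_lt hdeg), hd]

lemma md : ∀ n : ℕ, ((tFq (n + 1)).Monic ∧ (tFq (n + 1)).natDegree = n + 1)
    ∧ ((tFq (n + 2)).Monic ∧ (tFq (n + 2)).natDegree = n + 2) := by
  intro n
  induction n with
  | zero =>
    refine ⟨⟨by rw [tFq_one]; exact monic_X_sub_C 1, by rw [tFq_one]; exact natDegree_X_sub_C 1⟩, ?_⟩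
    have h2 : tFq 2 = (X - C 1) * (X - C 2) + 1 := by
      rw [tFq_two]; simp only [map_one, map_ofNat]; ring
    rw [h2]
    refine aux_monic _ _ 2 ((monic_X_sub_C 1).mul (monic_X_sub_C 2)) ?_ ?_
    · rw [((monic_X_sub_C (1:ℚ)).natDegree_mul (monic_X_sub_C 2)),
        natDegree_X_sub_C, natDegree_X_sub_C]
    · rw [degree_one]
      exact_mod_cast (by norm_num : (0:ℕ) < 2)
  | succ n ih =>
    refine ⟨ih.2, ?_⟩
    rw [show n + 1 + 2 = n + 3 from rfl, tFq_rec n]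
    have hm1 : ((X - C 3) * tFq (n + 2)).Monic := (monic_X_sub_C 3).mul ih.2.1
    have hm2 : ((X - C 1) * tFq (n + 1)).Monic := (monic_X_sub_C 1).mul ih.1.1
    refine aux_monic _ _ (n + 3) hm1 ?_ ?_
    · rw [(monic_X_sub_C (3:ℚ)).natDegree_mul ih.2.1, natDegree_X_sub_C, ih.2.2]
      omega
    · rw [degree_eq_natDegree hm2.ne_zero,
        (monic_X_sub_C (1:ℚ)).natDegree_mul ih.1.1, natDegree_X_sub_C, ih.1.2]
      exact_mod_cast (by omega : 1 + (n + 1) < n + 3)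

theorem tFq_explicit (m : ℕ) (hm : 1 ≤ m) :
    (tFq m =
      (∑ j ∈ Finset.range m, if 2 * j + 1 ≤ m then
          Polynomial.C (((m - 1 - j).choose j : ℚ))
            * (Polynomial.X - Polynomial.C 3) ^ (m - 1 - 2 * j)
            * (Polynomial.X - Polynomial.C 1) ^ (j + 1)
        else 0)
      + Polynomial.X *
        ∑ j ∈ Finset.range m, if 2 * j + 2 ≤ m then
          Polynomial.C (((m - 2 - j).choose j : ℚ))
            * (Polynomial.X - Polynomial.C 3) ^ (m - 2 - 2 * j)
            * (Polynomial.X - Polynomial.C 1) ^ j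
        else 0)
    ∧ (tFq m).Monic ∧ (tFq m).natDegree = m := by
  match m, hm with
  | 1, _ =>
    refine ⟨?_, by rw [tFq_one]; exact monic_X_sub_C 1, by rw [tFq_one]; exact natDegree_X_sub_C 1⟩
    rw [tFq_one, Finset.sum_range_one, Finset.sum_range_one]
    norm_num
  | (n + 2), _ =>
    refine ⟨?_, (md n).2.1, (md n).2.2⟩
    rw [(main n).1]
    congr 1
    · rw [sP_ext (n + 1) (n + 2) (by omega), Finset.mul_sum]
      refine Finset.sum_congr rfl (fun j _ => ?_)
      by_cases h : 2 * j + 1 ≤ n + 2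
      · rw [if_pos h, cf, show n + 2 - 1 - j = n + 1 - j by omega,
          show n + 2 - 1 - 2 * j = n + 1 - 2 * j by omega, pow_succ]
        ring
      · rw [if_neg h, cf_zero_of_lt (by omega), mul_zero]
    · congr 1
      rw [sP_ext n (n + 2) (by omega)]
      refine Finset.sum_congr rfl (fun j _ => ?_)
      by_cases h : 2 * j + 2 ≤ n + 2
      · rw [if_pos h, cf, show n + 2 - 2 - j = n - j by omega,
          show n + 2 - 2 - 2 * j = n - 2 * j by omega]
      · rw [if_neg h, cf_zero_of_lt (by omega)]
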